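/- arXiv:2503.18256 — 3 statements merged into one kernel-verified Lean document; each statement's English description precedes it below -/
import Mathlib

section
/- Consistency of the KL projection under a correctly specified conditional Bradley–Terry model: Let K ≥ 2, let ρ be a weight system on {1,…,K} whose comparison graph is connected, and suppose the target probability system satisfies q_{kl} = σ(θ⁰_k − θ⁰_l) for all k ≠ l, where θ⁰ ∈ ℝ^K has θ⁰_1 = 0. Then θ⁰ satisfies the estimating equations U_k(θ⁰) = 0 for all k ∈ {1,…,K}, and θ⁰ is the unique vector θ ∈ ℝ^K with θ_1 = 0 satisfying U_k(θ) = 0 for all k ∈ {1,…,K}. -/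
open scoped BigOperators

/-- The logistic sigmoid function `σ(t) = 1/(1+exp(−t))`. -/
noncomputable def sigmoid (t : ℝ) : ℝ := 1 / (1 + Real.exp (-t))

lemma sigmoid_strictMono : StrictMono sigmoid := by
  intro a b hab
  unfold sigmoid
  have h1 : (0:ℝ) < 1 + Real.exp (-b) := by positivity
  have h2 : 1 + Real.exp (-b) < 1 + Real.exp (-a) := by
    have := Real.exp_lt_exp.mpr (neg_lt_neg hab)
    linarith
  exact one_div_lt_one_div_of_lt h1 h2

/-- Consistency of the KL projection under a correctly specified conditional
Bradley–Terry model: if the comparison graph of the weight system is connected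
and `q k l = σ(θ⁰ k − θ⁰ l)` with `θ⁰` normalized at the reference player, then
`θ⁰` solves the estimating equations and is the unique normalized solution. -/
theorem kl_projection_consistency
    (K : ℕ) (hK : 2 ≤ K)
    (ρ : Fin K → Fin K → ℝ)
    (hρnn : ∀ k l : Fin K, k ≠ l → 0 ≤ ρ k l)
    (hρsym : ∀ k l : Fin K, k ≠ l → ρ k l = ρ l k)
    (hconn : (SimpleGraph.fromRel (fun k l : Fin K => 0 < ρ k l)).Connected)
    (q : Fin K → Fin K → ℝ)
    (θ0 : Fin K → ℝ)
    (hθ0 : θ0 ⟨0, by omega⟩ = 0)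
    (hmodel : ∀ k l : Fin K, k ≠ l → q k l = sigmoid (θ0 k - θ0 l)) :
    (∀ k : Fin K,
      ∑ l ∈ Finset.univ.filter (fun l => l ≠ k),
        ρ k l * (sigmoid (θ0 k - θ0 l) - q k l) = 0) ∧
    (∀ θ : Fin K → ℝ, θ ⟨0, by omega⟩ = 0 →
      (∀ k : Fin K,
        ∑ l ∈ Finset.univ.filter (fun l => l ≠ k),
          ρ k l * (sigmoid (θ k - θ l) - q k l) = 0) →
      θ = θ0) := by
  constructor
  · intro k
    apply Finset.sum_eq_zero
    intro l hl
    rw [Finset.mem_filter] at hl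
    rw [hmodel k l (Ne.symm hl.2)]
    ring
  · intro θ hθ1 heq
    set G := SimpleGraph.fromRel (fun k l : Fin K => 0 < ρ k l) with hG
    set d : Fin K → ℝ := fun k => θ k - θ0 k with hd
    obtain ⟨kmax, -, hkmax⟩ :=
      Finset.exists_max_image (Finset.univ : Finset (Fin K)) d
        ⟨⟨0, by omega⟩, Finset.mem_univ _⟩
    set M := d kmax with hM
    -- key step: if d k = M then any term is zero
    have step : ∀ k l : Fin K, G.Adj k l → d k = M → d l = M := by
      intro k l hadj hk
      rw [SimpleGraph.fromRel_adj] at hadj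
      obtain ⟨hne, hpos⟩ := hadj
      have hρpos : 0 < ρ k l := by
        rcases hpos with h | h
        · exact h
        · rw [hρsym k l hne]; exact h
      have hsum : ∑ l ∈ Finset.univ.filter (fun l => l ≠ k),
          ρ k l * (sigmoid (θ k - θ l) - sigmoid (θ0 k - θ0 l)) = 0 := by
        rw [← heq k]
        apply Finset.sum_congr rfl
        intro m hm
        rw [Finset.mem_filter] at hm
        rw [hmodel k m (Ne.symm hm.2)]
      have hnn : ∀ m ∈ Finset.univ.filter (fun l => l ≠ k),
          0 ≤ ρ k m * (sigmoid (θ k - θ m) - sigmoid (θ0 k - θ0 m)) := by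
        intro m hm
        rw [Finset.mem_filter] at hm
        apply mul_nonneg (hρnn k m (Ne.symm hm.2))
        rw [sub_nonneg]
        apply sigmoid_strictMono.monotone
        have : d m ≤ d k := by rw [hk]; exact hkmax m (Finset.mem_univ _)
        simp only [hd] at this
        linarith
      have hterm := (Finset.sum_eq_zero_iff_of_nonneg hnn).mp hsum l
        (by rw [Finset.mem_filter]; exact ⟨Finset.mem_univ _, Ne.symm hne⟩)
      have hsig : sigmoid (θ k - θ l) = sigmoid (θ0 k - θ0 l) := by
        rcases mul_eq_zero.mp hterm with h | h
        · exact absurd h (ne_of_gt hρpos)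
        · linarith [sub_eq_zero.mp h]
      have := sigmoid_strictMono.injective hsig
      simp only [hd]
      rw [← hk]
      simp only [hd]
      linarith
    have hall : ∀ v : Fin K, d v = M := by
      intro v
      obtain ⟨w⟩ := hconn.preconnected kmax v
      have : ∀ {a b : Fin K} (w : G.Walk a b), d a = M → d b = M := by
        intro a b w
        induction w with
        | nil => exact id
        | cons h _ ih => intro ha; exact ih (step _ _ h ha)
      exact this w rfl
    have hM0 : M = 0 := by
      have := hall ⟨0, by omega⟩
      simp only [hd] at this
      rw [hθ1, hθ0] at this
      linarith
    funext v
    have := hall v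
    rw [hM0] at this
    simp only [hd] at this
    linarith
end

section
/- Invertibility of the θ-Jacobian of the estimating function: Let K ≥ 2, let ρ be a weight system on {1,…,K} whose comparison graph is connected, and let θ ∈ ℝ^K. Then the (K−1)×(K−1) matrix M indexed by k,l ∈ {2,…,K}, with diagonal entries M_{kk} = Σ_{l∈{1,…,K}, l≠k} ρ_{kl} σ(θ_k−θ_l)(1−σ(θ_k−θ_l)) and off-diagonal entries M_{kl} = −ρ_{kl} σ(θ_k−θ_l)(1−σ(θ_k−θ_l)), is symmetric positive definite; in particular it is invertible. -/
open scoped BigOperators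
open Matrix

lemma sigmoid_pos (t : ℝ) : 0 < sigmoid t := by
  unfold sigmoid; positivity

lemma sigmoid_lt_one (t : ℝ) : sigmoid t < 1 := by
  unfold sigmoid
  rw [div_lt_one (by positivity)]
  linarith [Real.exp_pos (-t)]

lemma sigmoid_neg (t : ℝ) : sigmoid (-t) = 1 - sigmoid t := by
  unfold sigmoid
  rw [neg_neg]
  have h1 : (0:ℝ) < 1 + Real.exp t := by positivity
  have h2 : (0:ℝ) < 1 + Real.exp (-t) := by positivity
  have he : Real.exp t * Real.exp (-t) = 1 := by
    rw [← Real.exp_add]; simp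
  field_simp
  nlinarith [he]

lemma sprod_symm (a b : ℝ) :
    sigmoid (b - a) * (1 - sigmoid (b - a)) = sigmoid (a - b) * (1 - sigmoid (a - b)) := by
  rw [show b - a = -(a - b) by ring, sigmoid_neg]; ring

lemma sprod_pos (a b : ℝ) : 0 < sigmoid (a - b) * (1 - sigmoid (a - b)) :=
  mul_pos (sigmoid_pos _) (by linarith [sigmoid_lt_one (a - b)])

/-- Invertibility of the `θ`-Jacobian of the estimating function: if the
comparison graph of the weight system `ρ` is connected, then the matrix with
diagonal entries `∑_{l≠k} ρ_{kl} σ'(θ_k−θ_l)` and off-diagonal entries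
`−ρ_{kl} σ'(θ_k−θ_l)` (indexed by `{2,…,K}`) is symmetric positive definite;
in particular it is invertible. -/
theorem theta_jacobian_posDef
    (K : ℕ) (hK : 2 ≤ K)
    (ρ : Fin K → Fin K → ℝ)
    (hρnn : ∀ k l : Fin K, k ≠ l → 0 ≤ ρ k l)
    (hρsym : ∀ k l : Fin K, k ≠ l → ρ k l = ρ l k)
    (hconn : (SimpleGraph.fromRel (fun k l : Fin K => 0 < ρ k l)).Connected)
    (θ : Fin K → ℝ)
    (M : Matrix (Fin (K - 1)) (Fin (K - 1)) ℝ)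
    (hMdiag : ∀ i : Fin (K - 1),
      M i i = ∑ l ∈ Finset.univ.filter
          (fun l => l ≠ (⟨i.1 + 1, by have := i.isLt; omega⟩ : Fin K)),
        ρ ⟨i.1 + 1, by have := i.isLt; omega⟩ l *
          (sigmoid (θ ⟨i.1 + 1, by have := i.isLt; omega⟩ - θ l) *
            (1 - sigmoid (θ ⟨i.1 + 1, by have := i.isLt; omega⟩ - θ l))))
    (hMoff : ∀ i j : Fin (K - 1), i ≠ j →
      M i j = -(ρ ⟨i.1 + 1, by have := i.isLt; omega⟩ ⟨j.1 + 1, by have := j.isLt; omega⟩ *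
        (sigmoid (θ ⟨i.1 + 1, by have := i.isLt; omega⟩ - θ ⟨j.1 + 1, by have := j.isLt; omega⟩) *
          (1 - sigmoid (θ ⟨i.1 + 1, by have := i.isLt; omega⟩ -
            θ ⟨j.1 + 1, by have := j.isLt; omega⟩))))) :
    M.PosDef ∧ IsUnit M.det := by
  obtain ⟨n, rfl⟩ : ∃ n, K = n + 1 := ⟨K - 1, by omega⟩
  have hn : 0 < n := by omega
  -- the embedding of indices
  set e : Fin (n + 1 - 1) → Fin (n + 1) := fun i => ⟨i.1 + 1, by have := i.isLt; omega⟩ with hedef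
  have he_inj : Function.Injective e := by
    intro i j h
    have := congrArg Fin.val h
    simp only [hedef] at this
    exact Fin.ext (by omega)
  have he_ne : ∀ i, e i ≠ 0 := by
    intro i h
    have := Fin.ext_iff.mp h
    simp [hedef] at this
  -- the weight function
  set s : Fin (n+1) → Fin (n+1) → ℝ :=
    fun k l => sigmoid (θ k - θ l) * (1 - sigmoid (θ k - θ l)) with hsdef
  have hssym : ∀ k l, s k l = s l k := by
    intro k l; simp only [hsdef]; exact (sprod_symm (θ l) (θ k))
  have hspos : ∀ k l, 0 < s k l := fun k l => sprod_pos _ _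
  set w : Fin (n+1) → Fin (n+1) → ℝ :=
    fun k l => if k = l then 0 else ρ k l * s k l with hwdef
  have hw0 : ∀ k, w k k = 0 := by intro k; simp [hwdef]
  have hwnn : ∀ k l, 0 ≤ w k l := by
    intro k l
    by_cases h : k = l
    · simp [hwdef, h]
    · simp only [hwdef, if_neg h]
      exact mul_nonneg (hρnn k l h) (hspos k l).le
  have hwsym : ∀ k l, w k l = w l k := by
    intro k l
    by_cases h : k = l
    · subst h; rfl
    · simp only [hwdef, if_neg h, if_neg (Ne.symm h)]
      rw [hρsym k l h, hssym]
  have hwpos : ∀ k l, k ≠ l → 0 < ρ k l → 0 < w k l := by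
    intro k l h hρ
    simp only [hwdef, if_neg h]
    exact mul_pos hρ (hspos k l)
  -- matrix entries via w
  have hM : ∀ i j, M i j = (if i = j then ∑ l, w (e i) l else 0) - w (e i) (e j) := by
    intro i j
    by_cases h : i = j
    · subst h
      rw [hMdiag i, if_pos rfl, hw0, sub_zero]
      have h1 : ∀ l ∈ Finset.univ.filter (fun l => l ≠ e i),
          ρ (e i) l * (sigmoid (θ (e i) - θ l) * (1 - sigmoid (θ (e i) - θ l))) = w (e i) l := by
        intro l hl
        rw [Finset.mem_filter] at hl
        have hne : e i ≠ l := fun hh => hl.2 hh.symm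
        simp only [hwdef, if_neg hne, hsdef]
      refine Eq.trans (Finset.sum_congr rfl h1) ?_
      rw [Finset.filter_ne']
      exact Finset.sum_erase _ (hw0 (e i))
    · rw [hMoff i j h, if_neg h, zero_sub]
      have : e i ≠ e j := fun hh => h (he_inj hh)
      simp only [hwdef, if_neg this, hsdef]
      rfl
  -- the positive-definiteness
  have hpd : M.PosDef := by
    refine Matrix.PosDef.of_dotProduct_mulVec_pos ?_ ?_
    · -- Hermitian
      show Mᴴ = M
      ext i j
      simp only [conjTranspose_apply, star_trivial]
      rw [hM i j, hM j i, hwsym (e j) (e i)]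
      by_cases h : i = j
      · subst h; rfl
      · rw [if_neg h, if_neg (Ne.symm h)]
    · intro x hx
      have hstar : star x = x := rfl
      rw [hstar]
      -- the extended vector
      set y : Fin (n+1) → ℝ := fun k => if h : k = 0 then 0 else x (k.pred h) with hydef
      have hy0 : y 0 = 0 := by simp [hydef]
      have hye : ∀ i, y (e i) = x i := by
        intro i
        have hp : ∀ h, (e i).pred h = i := fun h => Fin.ext (by simp [hedef])
        simp only [hydef, dif_neg (he_ne i), hp]
      have key : dotProduct x (M *ᵥ x)
          = (∑ k, ∑ l, w k l * (y k - y l)^2) / 2 := by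
        have inner : ∀ i : Fin (n+1-1),
            (∑ j, x i * (((if i = j then ∑ l, w (e i) l else 0) - w (e i) (e j)) * x j))
              = x i ^ 2 * (∑ l, w (e i) l) - ∑ j, w (e i) (e j) * (x i * x j) := by
          intro i
          have hj : ∀ j ∈ Finset.univ,
              x i * (((if i = j then ∑ l, w (e i) l else 0) - w (e i) (e j)) * x j)
                = (if j = i then x i ^ 2 * (∑ l, w (e i) l) else 0)
                  - w (e i) (e j) * (x i * x j) := by
            intro j _
            by_cases h : i = j
            · subst h; simp; ring
            · rw [if_neg h, if_neg (Ne.symm h)]; ring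
          rw [Finset.sum_congr rfl hj, Finset.sum_sub_distrib,
            Finset.sum_ite_eq' Finset.univ i (fun _ => x i ^ 2 * (∑ l, w (e i) l))]
          simp
        have lhs : dotProduct x (M *ᵥ x)
            = (∑ i, x i ^ 2 * ∑ l, w (e i) l)
              - ∑ i, ∑ j, w (e i) (e j) * (x i * x j) := by
          calc dotProduct x (M *ᵥ x) = ∑ i, ∑ j, x i * (M i j * x j) := by
                simp [dotProduct, mulVec, Finset.mul_sum]
            _ = ∑ i, (x i ^ 2 * (∑ l, w (e i) l) - ∑ j, w (e i) (e j) * (x i * x j)) := by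
                refine Finset.sum_congr rfl fun i _ => ?_
                rw [← inner i]
                exact Finset.sum_congr rfl fun j _ => by rw [hM i j]
            _ = _ := Finset.sum_sub_distrib _ _
        have T1 : (∑ k, ∑ l, w k l * y k ^ 2) = ∑ i, x i ^ 2 * ∑ l, w (e i) l := by
          rw [Fin.sum_univ_succ]
          have : (∑ l, w 0 l * y 0 ^ 2) = 0 := by simp [hy0]
          rw [this, zero_add]
          apply Finset.sum_congr rfl
          intro i _
          show (∑ l, w (e i) l * y (e i) ^ 2) = _
          rw [hye, Finset.mul_sum]
          exact Finset.sum_congr rfl fun l _ => mul_comm _ _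
        have T3 : (∑ k, ∑ l, w k l * (y k * y l)) = ∑ i, ∑ j, w (e i) (e j) * (x i * x j) := by
          rw [Fin.sum_univ_succ]
          have : (∑ l, w 0 l * (y 0 * y l)) = 0 := by simp [hy0]
          rw [this, zero_add]
          apply Finset.sum_congr rfl
          intro i _
          show (∑ l, w (e i) l * (y (e i) * y l)) = _
          rw [Fin.sum_univ_succ]
          have : w (e i) 0 * (y (e i) * y 0) = 0 := by simp [hy0]
          rw [this, zero_add]
          apply Finset.sum_congr rfl
          intro j _
          show w (e i) (e j) * (y (e i) * y (e j)) = _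
          rw [hye, hye]
        have T2 : (∑ k, ∑ l, w k l * y l ^ 2) = ∑ k, ∑ l, w k l * y k ^ 2 := by
          rw [Finset.sum_comm]
          apply Finset.sum_congr rfl
          intro k _
          apply Finset.sum_congr rfl
          intro l _
          rw [hwsym]
        have expand : (∑ k, ∑ l, w k l * (y k - y l)^2)
            = (∑ k, ∑ l, w k l * y k ^ 2) + (∑ k, ∑ l, w k l * y l ^ 2)
              - 2 * (∑ k, ∑ l, w k l * (y k * y l)) := by
          rw [← Finset.sum_add_distrib, Finset.mul_sum, ← Finset.sum_sub_distrib]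
          apply Finset.sum_congr rfl
          intro k _
          rw [← Finset.sum_add_distrib, Finset.mul_sum, ← Finset.sum_sub_distrib]
          apply Finset.sum_congr rfl
          intro l _; ring
        rw [lhs, expand, T2, T1, T3]; ring
      have hnonneg : 0 ≤ ∑ k, ∑ l, w k l * (y k - y l)^2 := by
        apply Finset.sum_nonneg
        intro k _
        apply Finset.sum_nonneg
        intro l _
        exact mul_nonneg (hwnn k l) (sq_nonneg _)
      rcases lt_or_eq_of_le hnonneg with hlt | heq
      · rw [key]; positivity
      · exfalso
        -- all terms vanish
        have hterm : ∀ k l, w k l * (y k - y l)^2 = 0 := by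
          intro k l
          have h1 : ∀ k ∈ Finset.univ, (0:ℝ) ≤ ∑ l, w k l * (y k - y l)^2 :=
            fun k _ => Finset.sum_nonneg fun l _ => mul_nonneg (hwnn k l) (sq_nonneg _)
          have h2 := (Finset.sum_eq_zero_iff_of_nonneg h1).mp heq.symm k (Finset.mem_univ k)
          have h3 : ∀ l ∈ Finset.univ, (0:ℝ) ≤ w k l * (y k - y l)^2 :=
            fun l _ => mul_nonneg (hwnn k l) (sq_nonneg _)
          exact (Finset.sum_eq_zero_iff_of_nonneg h3).mp h2 l (Finset.mem_univ l)
        have hadj : ∀ k l : Fin (n+1),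
            (SimpleGraph.fromRel (fun k l => 0 < ρ k l)).Adj k l → y k = y l := by
          intro k l hkl
          rw [SimpleGraph.fromRel_adj] at hkl
          obtain ⟨hne, hor⟩ := hkl
          have hρpos : 0 < ρ k l := by
            rcases hor with h | h
            · exact h
            · rw [hρsym k l hne]; exact h
          have hwkl := hwpos k l hne hρpos
          have := hterm k l
          have hsq : (y k - y l)^2 = 0 := by
            rcases mul_eq_zero.mp this with h | h
            · exact absurd h hwkl.ne'
            · exact h
          have := pow_eq_zero_iff (n := 2) (by norm_num) |>.mp hsq
          linarith [sub_eq_zero.mp this]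
        have hwalk : ∀ a b : Fin (n+1),
            ∀ _p : (SimpleGraph.fromRel fun k l => 0 < ρ k l).Walk a b, y a = y b := by
          intro a b p
          induction p with
          | nil => rfl
          | cons h q ih => rw [hadj _ _ h, ih]
        have hconst : ∀ k : Fin (n+1), y k = y 0 := fun k =>
          (hconn.preconnected 0 k).elim fun p => (hwalk _ _ p).symm
        have : x = 0 := by
          funext i
          have := hconst (e i)
          rw [hye, hy0] at this
          simpa using this
        exact hx this
  exact ⟨hpd, hpd.det_pos.ne'.isUnit⟩
end

section
/- Local differentiability of the Bradley–Terry projection in the winning probabilities (key first-order expansion in the proof of Theorem 1): Let K ≥ 2 and let ρ be a weight system on {1,…,K} whose comparison graph is connected. For ϑ ∈ ℝ^{K−1} (indexed by 2,…,K) write θ(ϑ) ∈ ℝ^K for the vector with first coordinate 0 and remaining coordinates ϑ; for q ∈ (0,1)^{{(k,l): 1≤k<l≤K}} extend q by q_{lk} := 1 − q_{kl}. Define F : ℝ^{K−1} × (0,1)^{K(K−1)/2} → ℝ^{K−1} by F_k(ϑ, q) = Σ_{l≠k} ρ_{kl}(σ(θ(ϑ)_k − θ(ϑ)_l) − q_{kl})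 for k = 2,…,K. If F(ϑ₀, q₀) = 0, then the partial Jacobian ∂F/∂ϑ at (ϑ₀, q₀) is invertible, and there exist an open neighborhood V of q₀ and a continuously differentiable map q ↦ ϑ(q) on V such that ϑ(q₀) = ϑ₀, F(ϑ(q), q) = 0 for all q ∈ V, and the derivative of q ↦ ϑ(q) at q₀ equals −(∂F/∂ϑ(ϑ₀,q₀))^{−1} ∂F/∂q(ϑ₀,q₀). -/
open scoped BigOperators

/-- The index set `{(k,l) : 1 ≤ k < l ≤ K}` of unordered pairs. -/
abbrev Pairs (K : ℕ) := { p : Fin K × Fin K // p.1 < p.2 }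

/-- Extension of a family `q` indexed by pairs `k < l` to all ordered pairs
with `k ≠ l`, via `q_{lk} = 1 − q_{kl}`. -/
noncomputable def qExtend (K : ℕ) (q : Pairs K → ℝ) (k l : Fin K) : ℝ :=
  if h : k < l then q ⟨(k, l), h⟩
  else if h' : l < k then 1 - q ⟨(l, k), h'⟩ else 0

/-- Extension of `ϑ ∈ ℝ^{K−1}` (indexed by `{2,…,K}`) to `θ(ϑ) ∈ ℝ^K` with
first coordinate `0`. -/
def thetaExtend (K : ℕ) (ϑ : Fin (K - 1) → ℝ) (k : Fin K) : ℝ :=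
  if h : k.1 = 0 then 0 else ϑ ⟨k.1 - 1, by have := k.isLt; omega⟩

/-- The map `F(ϑ, q)` whose components are the estimating equations
`F_k(ϑ, q) = ∑_{l ≠ k} ρ_{kl} (σ(θ(ϑ)_k − θ(ϑ)_l) − q_{kl})` for
`k = 2,…,K`. -/
noncomputable def Fmap (K : ℕ) (ρ : Fin K → Fin K → ℝ)
    (p : (Fin (K - 1) → ℝ) × (Pairs K → ℝ)) : Fin (K - 1) → ℝ :=
  fun i =>
    ∑ l ∈ Finset.univ.filter
        (fun l => l ≠ (⟨i.1 + 1, by have := i.isLt; omega⟩ : Fin K)),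
      ρ ⟨i.1 + 1, by have := i.isLt; omega⟩ l *
        (sigmoid (thetaExtend K p.1 ⟨i.1 + 1, by have := i.isLt; omega⟩ -
            thetaExtend K p.1 l) -
          qExtend K p.2 ⟨i.1 + 1, by have := i.isLt; omega⟩ l)

/-! ### Auxiliary definitions and lemmas -/


noncomputable def sigd (t : ℝ) : ℝ := Real.exp (-t) / (1 + Real.exp (-t)) ^ 2

lemma one_add_exp_pos (t : ℝ) : 0 < 1 + Real.exp (-t) := by positivity

lemma sigd_pos (t : ℝ) : 0 < sigd t := by
  unfold sigd
  have := one_add_exp_pos t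
  positivity

lemma sigd_even (t : ℝ) : sigd (-t) = sigd t := by
  unfold sigd
  rw [neg_neg, Real.exp_neg]
  have h : 0 < Real.exp t := Real.exp_pos t
  field_simp
  ring

lemma hasDerivAt_sigmoid (t : ℝ) : HasDerivAt sigmoid (sigd t) t := by
  have h1 : HasDerivAt (fun t : ℝ => 1 + Real.exp (-t)) (-Real.exp (-t)) t := by
    have := ((Real.hasDerivAt_exp (-t)).comp t ((hasDerivAt_id t).neg))
    simpa using this.const_add 1
  have h2 := h1.inv (one_add_exp_pos t).ne'
  have : sigmoid = fun t : ℝ => (1 + Real.exp (-t))⁻¹ := by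
    funext s; simp [sigmoid, one_div]
  rw [this]
  convert h2 using 1
  any_goals rfl
  unfold sigd
  field_simp

lemma contDiff_sigmoid' : ContDiff ℝ 1 sigmoid := by
  unfold sigmoid
  exact contDiff_const.div (contDiff_const.add ((Real.contDiff_exp.of_le le_top).comp contDiff_neg))
    fun t => (one_add_exp_pos t).ne'

noncomputable def thetaCLM (K : ℕ) (k : Fin K) : (Fin (K - 1) → ℝ) →L[ℝ] ℝ :=
  if h : k.1 = 0 then 0 else
    ContinuousLinearMap.proj (R := ℝ) (φ := fun _ : Fin (K - 1) => ℝ)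
      ⟨k.1 - 1, by have := k.isLt; omega⟩

lemma thetaCLM_apply (K : ℕ) (k : Fin K) (ϑ : Fin (K - 1) → ℝ) :
    thetaCLM K k ϑ = thetaExtend K ϑ k := by
  unfold thetaCLM thetaExtend
  split <;> simp

noncomputable def qCLM (K : ℕ) (k l : Fin K) : (Pairs K → ℝ) →L[ℝ] ℝ :=
  if h : k < l then ContinuousLinearMap.proj (R := ℝ) (φ := fun _ : Pairs K => ℝ) ⟨(k, l), h⟩
  else if h' : l < k then
    -ContinuousLinearMap.proj (R := ℝ) (φ := fun _ : Pairs K => ℝ) ⟨(l, k), h'⟩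
  else 0

def qConst (K : ℕ) (k l : Fin K) : ℝ := if k < l then 0 else if l < k then 1 else 0

lemma qExtend_eq (K : ℕ) (q : Pairs K → ℝ) (k l : Fin K) :
    qExtend K q k l = qConst K k l + qCLM K k l q := by
  unfold qExtend qConst qCLM
  split_ifs <;> simp <;> ring

def kof (K : ℕ) (i : Fin (K - 1)) : Fin K := ⟨i.1 + 1, by have := i.isLt; omega⟩

lemma Fmap_eq (K : ℕ) (ρ : Fin K → Fin K → ℝ) (p : (Fin (K - 1) → ℝ) × (Pairs K → ℝ)) :
    Fmap K ρ p = fun i =>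
      ∑ l ∈ Finset.univ.filter (fun l => l ≠ kof K i),
        ρ (kof K i) l *
          (sigmoid ((thetaCLM K (kof K i) - thetaCLM K l) p.1) -
            (qConst K (kof K i) l + qCLM K (kof K i) l p.2)) := by
  funext i
  unfold Fmap
  refine Finset.sum_congr rfl fun l hl => ?_
  rw [ContinuousLinearMap.sub_apply, thetaCLM_apply, thetaCLM_apply, ← qExtend_eq]
  rfl

section Deriv
variable (K : ℕ) (ρ : Fin K → Fin K → ℝ) (ϑ₀ : Fin (K - 1) → ℝ) (q₀ : Pairs K → ℝ)

local notation "E" => (Fin (K - 1) → ℝ)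
local notation "Q" => (Pairs K → ℝ)

lemma contDiff_Fmap : ContDiff ℝ 1 (Fmap K ρ) := by
  rw [show Fmap K ρ = fun p => Fmap K ρ p from rfl]
  apply contDiff_pi.2
  intro i
  have : (fun p : E × Q => Fmap K ρ p i) = fun p =>
      ∑ l ∈ Finset.univ.filter (fun l => l ≠ kof K i),
        ρ (kof K i) l *
          (sigmoid ((thetaCLM K (kof K i) - thetaCLM K l) p.1) -
            (qConst K (kof K i) l + qCLM K (kof K i) l p.2)) := by
    funext p; rw [Fmap_eq]
  rw [this]
  apply ContDiff.sum
  intro l hl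
  exact contDiff_const.mul
    (((contDiff_sigmoid'.comp ((thetaCLM K (kof K i) - thetaCLM K l).contDiff.comp
        contDiff_fst))).sub
      (contDiff_const.add ((qCLM K (kof K i) l).contDiff.comp contDiff_snd)))

/-- full derivative of `Fmap` at `(ϑ₀, q₀)` -/
noncomputable def DF : (E × Q) →L[ℝ] E :=
  ContinuousLinearMap.pi fun i =>
    ∑ l ∈ Finset.univ.filter (fun l => l ≠ kof K i),
      ρ (kof K i) l •
        (sigd (thetaExtend K ϑ₀ (kof K i) - thetaExtend K ϑ₀ l) •
            ((thetaCLM K (kof K i) - thetaCLM K l).comp (ContinuousLinearMap.fst ℝ E Q)) -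
          (qCLM K (kof K i) l).comp (ContinuousLinearMap.snd ℝ E Q))

lemma hasFDerivAt_Fmap : HasFDerivAt (Fmap K ρ) (DF K ρ ϑ₀) (ϑ₀, q₀) := by
  apply hasFDerivAt_pi''
  intro i
  have hproj : (ContinuousLinearMap.proj (R := ℝ) (φ := fun _ : Fin (K-1) => ℝ) i).comp
      (DF K ρ ϑ₀) =
      ∑ l ∈ Finset.univ.filter (fun l => l ≠ kof K i),
        ρ (kof K i) l •
          (sigd (thetaExtend K ϑ₀ (kof K i) - thetaExtend K ϑ₀ l) •
              ((thetaCLM K (kof K i) - thetaCLM K l).comp (ContinuousLinearMap.fst ℝ E Q)) -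
            (qCLM K (kof K i) l).comp (ContinuousLinearMap.snd ℝ E Q)) := by
    refine ContinuousLinearMap.ext fun p => ?_
    simp [DF]
  rw [hproj]
  have heq : (fun p : E × Q => Fmap K ρ p i) = fun p =>
      ∑ l ∈ Finset.univ.filter (fun l => l ≠ kof K i),
        ρ (kof K i) l *
          (sigmoid ((thetaCLM K (kof K i) - thetaCLM K l) p.1) -
            (qConst K (kof K i) l + qCLM K (kof K i) l p.2)) := by
    funext p; rw [Fmap_eq]
  rw [heq]
  apply HasFDerivAt.fun_sum
  intro l hl
  set T := thetaCLM K (kof K i) - thetaCLM K l with hT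
  have h1 : HasFDerivAt (fun p : E × Q => sigmoid (T p.1))
      (sigd (thetaExtend K ϑ₀ (kof K i) - thetaExtend K ϑ₀ l) •
        (T.comp (ContinuousLinearMap.fst ℝ E Q))) (ϑ₀, q₀) := by
    have hc := (T.comp (ContinuousLinearMap.fst ℝ E Q)).hasFDerivAt (x := (ϑ₀, q₀))
    have hd := hasDerivAt_sigmoid ((T.comp (ContinuousLinearMap.fst ℝ E Q)) (ϑ₀, q₀))
    have := hd.comp_hasFDerivAt (ϑ₀, q₀) hc
    convert this using 2
    any_goals rfl
    simp [hT, thetaCLM_apply]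
  have h2 : HasFDerivAt (fun p : E × Q => qConst K (kof K i) l + qCLM K (kof K i) l p.2)
      ((qCLM K (kof K i) l).comp (ContinuousLinearMap.snd ℝ E Q)) (ϑ₀, q₀) :=
    ((qCLM K (kof K i) l).comp (ContinuousLinearMap.snd ℝ E Q)).hasFDerivAt.const_add _
  exact (h1.sub h2).const_mul _

end Deriv

lemma graph_const {V : Type*} {G : SimpleGraph V} (h : G.Connected) (f : V → ℝ)
    (hf : ∀ a b, G.Adj a b → f a = f b) (a b : V) : f a = f b := by
  obtain ⟨w⟩ := h a b
  induction w with
  | nil => rfl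
  | cons h' p ih => exact (hf _ _ h').trans ih

section Inj
variable (K : ℕ) (ρ : Fin K → Fin K → ℝ) (ϑ₀ : Fin (K - 1) → ℝ)

local notation "E" => (Fin (K - 1) → ℝ)
local notation "Q" => (Pairs K → ℝ)

noncomputable def Lmap : E →L[ℝ] E :=
  (DF K ρ ϑ₀).comp (ContinuousLinearMap.inl ℝ E Q)

lemma Lmap_apply (v : E) (i : Fin (K - 1)) :
    Lmap K ρ ϑ₀ v i = ∑ l ∈ Finset.univ.filter (fun l => l ≠ kof K i),
      ρ (kof K i) l * (sigd (thetaExtend K ϑ₀ (kof K i) - thetaExtend K ϑ₀ l) *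
        (thetaExtend K v (kof K i) - thetaExtend K v l)) := by
  simp [Lmap, DF, ContinuousLinearMap.sum_apply, thetaCLM_apply, mul_assoc]

lemma Lmap_inj (hK : 2 ≤ K)
    (hρnn : ∀ k l : Fin K, k ≠ l → 0 ≤ ρ k l)
    (hρsym : ∀ k l : Fin K, k ≠ l → ρ k l = ρ l k)
    (hconn : (SimpleGraph.fromRel (fun k l : Fin K => 0 < ρ k l)).Connected) :
    ∀ v : E, Lmap K ρ ϑ₀ v = 0 → v = 0 := by
  intro v hv
  set u : Fin K → ℝ := thetaExtend K v with hu
  set W : Fin K → Fin K → ℝ :=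
    fun k l => ρ k l * sigd (thetaExtend K ϑ₀ k - thetaExtend K ϑ₀ l) with hW
  have hukof : ∀ i : Fin (K - 1), u (kof K i) = v i := by
    intro i
    simp only [hu, thetaExtend, kof]
    rw [dif_neg (by omega)]
    congr 1
  have hu0 : ∀ k : Fin K, k.1 = 0 → u k = 0 := by
    intro k hk; simp [hu, thetaExtend, hk]
  have hWsym : ∀ k l, k ≠ l → W k l = W l k := by
    intro k l hkl
    simp only [hW]
    rw [hρsym k l hkl]
    congr 1
    rw [show thetaExtend K ϑ₀ k - thetaExtend K ϑ₀ l
        = -(thetaExtend K ϑ₀ l - thetaExtend K ϑ₀ k) by ring, sigd_even]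
  set g : Fin K → ℝ := fun k => ∑ l, (if l ≠ k then W k l * (u k - u l) else 0) with hg
  have hgkof : ∀ i : Fin (K - 1), g (kof K i) = Lmap K ρ ϑ₀ v i := by
    intro i
    rw [Lmap_apply, Finset.sum_filter]
    simp only [hg, hW, hu]
    refine Finset.sum_congr rfl fun l _ => ?_
    split
    · ring
    · rfl
  have hS : ∑ k, u k * g k = 0 := by
    apply Finset.sum_eq_zero
    intro k _
    by_cases hk0 : k.1 = 0
    · rw [hu0 k hk0]; ring
    · have hlt : k.1 - 1 < K - 1 := by have := k.isLt; omega
      have hkk : k = kof K ⟨k.1 - 1, hlt⟩ := by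
        apply Fin.ext; simp [kof]; omega
      rw [hkk, hgkof, show Lmap K ρ ϑ₀ v ⟨k.1 - 1, hlt⟩ = 0 from congrFun hv _]
      ring
  set S1 : ℝ := ∑ k, ∑ l, (if l ≠ k then W k l * (u k * (u k - u l)) else 0) with hS1
  have hS1S : S1 = ∑ k, u k * g k := by
    refine Finset.sum_congr rfl fun k _ => ?_
    rw [hg, Finset.mul_sum]
    refine Finset.sum_congr rfl fun l _ => ?_
    split <;> ring
  have hB : ∑ k, ∑ l, (if l ≠ k then W k l * (u l * (u k - u l)) else 0) = -S1 := by
    have hterm : ∀ a b : Fin K, (if a ≠ b then W b a * (u a * (u b - u a)) else 0)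
        = -(if b ≠ a then W a b * (u a * (u a - u b)) else 0) := by
      intro a b
      by_cases h : a = b
      · simp [h]
      · rw [if_pos h, if_pos (Ne.symm h), ← hWsym a b h]
        ring
    calc ∑ k, ∑ l, (if l ≠ k then W k l * (u l * (u k - u l)) else 0)
        = ∑ l, ∑ k, (if l ≠ k then W k l * (u l * (u k - u l)) else 0) := Finset.sum_comm
      _ = ∑ l, ∑ k, -(if k ≠ l then W l k * (u l * (u l - u k)) else 0) :=
          Finset.sum_congr rfl fun l _ => Finset.sum_congr rfl fun k _ => hterm l k
      _ = -S1 := by rw [hS1]; simp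
  have hE2 : ∑ k, ∑ l, (if l ≠ k then W k l * (u k - u l) ^ 2 else 0) = 0 := by
    have hsplit : ∀ k l : Fin K, (if l ≠ k then W k l * (u k - u l) ^ 2 else 0)
        = (if l ≠ k then W k l * (u k * (u k - u l)) else 0)
          - (if l ≠ k then W k l * (u l * (u k - u l)) else 0) := by
      intro k l; split <;> ring
    calc ∑ k, ∑ l, (if l ≠ k then W k l * (u k - u l) ^ 2 else 0)
        = ∑ k, ∑ l, ((if l ≠ k then W k l * (u k * (u k - u l)) else 0)
            - (if l ≠ k then W k l * (u l * (u k - u l)) else 0)) := by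
          exact Finset.sum_congr rfl fun k _ => Finset.sum_congr rfl fun l _ => hsplit k l
      _ = (∑ k, ∑ l, (if l ≠ k then W k l * (u k * (u k - u l)) else 0))
            - ∑ k : Fin K, ∑ l, (if l ≠ k then W k l * (u l * (u k - u l)) else 0) := by
          rw [← Finset.sum_sub_distrib]
          exact Finset.sum_congr rfl fun k _ => Finset.sum_sub_distrib _ _
      _ = S1 - (-S1) := by rw [← hS1, hB]
      _ = 2 * ∑ k, u k * g k := by rw [hS1S]; ring
      _ = 0 := by rw [hS]; ring
  have hnn : ∀ k l : Fin K, 0 ≤ (if l ≠ k then W k l * (u k - u l) ^ 2 else 0) := by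
    intro k l
    split
    · next h =>
      apply mul_nonneg
      · exact mul_nonneg (hρnn k l (Ne.symm h)) (sigd_pos _).le
      · positivity
    · exact le_rfl
  have houter := (Finset.sum_eq_zero_iff_of_nonneg
    (fun k _ => Finset.sum_nonneg fun l _ => hnn k l)).1 hE2
  have hterm0 : ∀ k l : Fin K, l ≠ k → W k l * (u k - u l) ^ 2 = 0 := by
    intro k l hlk
    have hinner := (Finset.sum_eq_zero_iff_of_nonneg
      (fun l _ => hnn k l)).1 (houter k (Finset.mem_univ k)) l (Finset.mem_univ l)
    rwa [if_pos hlk] at hinner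
  have hadj : ∀ a b : Fin K,
      (SimpleGraph.fromRel (fun k l : Fin K => 0 < ρ k l)).Adj a b → u a = u b := by
    intro a b hab
    rw [SimpleGraph.fromRel_adj] at hab
    obtain ⟨hne, hr⟩ := hab
    have hρpos : 0 < ρ a b := by
      rcases hr with h | h
      · exact h
      · rw [hρsym a b hne]; exact h
    have hWpos : 0 < W a b := mul_pos hρpos (sigd_pos _)
    have h0 := hterm0 a b (Ne.symm hne)
    have hsq : (u a - u b) ^ 2 = 0 := by
      rcases mul_eq_zero.1 h0 with h | h
      · exact absurd h hWpos.ne'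
      · exact h
    have := pow_eq_zero_iff (n := 2) (by norm_num) |>.1 hsq
    exact sub_eq_zero.1 this
  have hzero : Fin K := ⟨0, by omega⟩
  have hconst : ∀ k : Fin K, u k = u ⟨0, by omega⟩ :=
    fun k => graph_const hconn u hadj k _
  funext i
  show v i = 0
  rw [← hukof i, hconst (kof K i), hu0 _ rfl]

end Inj

/-- Local differentiability of the Bradley–Terry projection in the winning
probabilities: at a zero `(ϑ₀, q₀)` of `F`, the partial Jacobian `∂F/∂ϑ` is
invertible and there is a local continuously differentiable implicit solution
map `q ↦ ϑ(q)` with derivative `−(∂F/∂ϑ)⁻¹ ∂F/∂q` at `q₀`. -/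
theorem BT_projection_implicit_function
    (K : ℕ) (hK : 2 ≤ K)
    (ρ : Fin K → Fin K → ℝ)
    (hρnn : ∀ k l : Fin K, k ≠ l → 0 ≤ ρ k l)
    (hρsym : ∀ k l : Fin K, k ≠ l → ρ k l = ρ l k)
    (hconn : (SimpleGraph.fromRel (fun k l : Fin K => 0 < ρ k l)).Connected)
    (ϑ₀ : Fin (K - 1) → ℝ) (q₀ : Pairs K → ℝ)
    (hq₀ : ∀ p : Pairs K, q₀ p ∈ Set.Ioo (0 : ℝ) 1)
    (hF0 : Fmap K ρ (ϑ₀, q₀) = 0) :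
    ∃ A : (Fin (K - 1) → ℝ) ≃L[ℝ] (Fin (K - 1) → ℝ),
      (A : (Fin (K - 1) → ℝ) →L[ℝ] (Fin (K - 1) → ℝ)) =
        fderiv ℝ (fun ϑ : Fin (K - 1) → ℝ => Fmap K ρ (ϑ, q₀)) ϑ₀ ∧
      ∃ V : Set (Pairs K → ℝ), IsOpen V ∧ q₀ ∈ V ∧
        ∃ φ : (Pairs K → ℝ) → (Fin (K - 1) → ℝ),
          ContDiffOn ℝ 1 φ V ∧
          φ q₀ = ϑ₀ ∧
          (∀ q ∈ V, Fmap K ρ (φ q, q) = 0) ∧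
          fderiv ℝ φ q₀ =
            -((A.symm : (Fin (K - 1) → ℝ) →L[ℝ] (Fin (K - 1) → ℝ)).comp
                (fderiv ℝ (fun q : Pairs K → ℝ => Fmap K ρ (ϑ₀, q)) q₀)) := by

  classical
  set L := Lmap K ρ ϑ₀ with hLdef
  have hDF := hasFDerivAt_Fmap K ρ ϑ₀ q₀
  have hLd : HasFDerivAt (fun ϑ => Fmap K ρ (ϑ, q₀)) L ϑ₀ :=
    by have := hDF.comp ϑ₀ (hasFDerivAt_prodMk_left (𝕜 := ℝ) ϑ₀ q₀); exact this
  set M := (DF K ρ ϑ₀).comp (ContinuousLinearMap.inr ℝ _ _) with hMdef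
  have hMd : HasFDerivAt (fun q => Fmap K ρ (ϑ₀, q)) M q₀ :=
    hDF.comp q₀ (hasFDerivAt_prodMk_right ϑ₀ q₀)
  have hinj0 := Lmap_inj K ρ ϑ₀ hK hρnn hρsym hconn
  have hinj : Function.Injective L := by
    intro a b hab
    have h0 : L (a - b) = 0 := by rw [map_sub, hab, sub_self]
    have := hinj0 _ h0
    exact sub_eq_zero.1 this
  have hsurj : Function.Surjective L :=
    (LinearMap.injective_iff_surjective
      (f := ((L : (Fin (K - 1) → ℝ) →L[ℝ] (Fin (K - 1) → ℝ)) :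
        (Fin (K - 1) → ℝ) →ₗ[ℝ] (Fin (K - 1) → ℝ)))).1 hinj
  let A : (Fin (K - 1) → ℝ) ≃L[ℝ] (Fin (K - 1) → ℝ) :=
    LinearEquiv.toContinuousLinearEquiv
      (LinearEquiv.ofBijective
        ((L : (Fin (K - 1) → ℝ) →L[ℝ] (Fin (K - 1) → ℝ)) :
          (Fin (K - 1) → ℝ) →ₗ[ℝ] (Fin (K - 1) → ℝ)) ⟨hinj, hsurj⟩)
  have hAapp : ∀ v, A v = L v := fun v => rfl
  refine ⟨A, ?_, ?_⟩
  · rw [hLd.fderiv]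
    exact ContinuousLinearMap.ext fun v => hAapp v
  have hLA : ∀ x, L (A.symm x) = x := fun x => by
    rw [← hAapp]; exact A.apply_symm_apply x
  have hsplitDF : ∀ v w, DF K ρ ϑ₀ (v, w) = L v + M w := by
    intro v w
    rw [hLdef, hMdef]
    simp only [Lmap, ContinuousLinearMap.comp_apply, ContinuousLinearMap.inl_apply,
      ContinuousLinearMap.inr_apply]
    rw [← map_add]
    congr 1
    simp
  set f₀ := (DF K ρ ϑ₀).prod (ContinuousLinearMap.snd ℝ _ _) with hf₀
  set g₀ := ((A.symm : (Fin (K - 1) → ℝ) →L[ℝ] (Fin (K - 1) → ℝ)).comp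
      ((ContinuousLinearMap.fst ℝ _ _) - M.comp (ContinuousLinearMap.snd ℝ _ _))).prod
    (ContinuousLinearMap.snd ℝ _ _) with hg₀
  have hg₀app : ∀ p : (Fin (K - 1) → ℝ) × (Pairs K → ℝ),
      g₀ p = (A.symm (p.1 - M p.2), p.2) := fun p => rfl
  have hf₀app : ∀ p : (Fin (K - 1) → ℝ) × (Pairs K → ℝ),
      f₀ p = (DF K ρ ϑ₀ p, p.2) := fun p => rfl
  have h₁ : Function.LeftInverse g₀ f₀ := by
    rintro ⟨v, w⟩
    rw [hf₀app, hg₀app]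
    have : DF K ρ ϑ₀ (v, w) - M w = L v := by rw [hsplitDF]; abel
    simp only [this]
    rw [← hAapp, A.symm_apply_apply]
  have h₂ : Function.RightInverse g₀ f₀ := by
    rintro ⟨x, w⟩
    rw [hg₀app, hf₀app]
    simp only
    rw [hsplitDF, hLA]
    congr 1
    abel
  set e := ContinuousLinearEquiv.equivOfInverse f₀ g₀ h₁ h₂ with he
  have heapp : ∀ p, e p = f₀ p := fun p => rfl
  have hesymm : ∀ y, e.symm y = g₀ y := by
    intro y
    apply e.injective
    rw [e.apply_symm_apply, heapp]
    exact (h₂ y).symm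
  set Gm := fun p : (Fin (K - 1) → ℝ) × (Pairs K → ℝ) => (Fmap K ρ p, p.2) with hGm
  have hGc : ContDiffAt ℝ 1 Gm (ϑ₀, q₀) := ((contDiff_Fmap K ρ).prodMk contDiff_snd).contDiffAt
  have hGd : HasFDerivAt Gm
      (e : ((Fin (K - 1) → ℝ) × (Pairs K → ℝ)) →L[ℝ] ((Fin (K - 1) → ℝ) × (Pairs K → ℝ)))
      (ϑ₀, q₀) := by
    have hcoe : (e : ((Fin (K - 1) → ℝ) × (Pairs K → ℝ)) →L[ℝ]
        ((Fin (K - 1) → ℝ) × (Pairs K → ℝ))) = f₀ := rfl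
    rw [hcoe]
    exact hDF.prodMk hasFDerivAt_snd
  have hstrict := hGc.hasStrictFDerivAt' hGd one_ne_zero
  set gi := hstrict.localInverse Gm e (ϑ₀, q₀) with hgi
  have hGp : Gm (ϑ₀, q₀) = ((0 : Fin (K - 1) → ℝ), q₀) := by
    rw [hGm]; simp [hF0]
  have hgc : ContDiffAt ℝ 1 gi (Gm (ϑ₀, q₀)) := hGc.to_localInverse hGd one_ne_zero
  have hgd : HasStrictFDerivAt gi
      ((e.symm : ((Fin (K - 1) → ℝ) × (Pairs K → ℝ)) →L[ℝ] _)) (Gm (ϑ₀, q₀)) :=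
    hstrict.to_localInverse
  have hri : ∀ᶠ y in nhds (Gm (ϑ₀, q₀)), Gm (gi y) = y := hstrict.eventually_right_inverse
  have hfix : gi (Gm (ϑ₀, q₀)) = (ϑ₀, q₀) := hstrict.localInverse_apply_image
  rw [hGp] at hgc hgd hri hfix
  obtain ⟨u1, hu1, hgu1⟩ := hgc.contDiffOn le_rfl (by simp)
  obtain ⟨t, ht, hrt⟩ := hri.exists_mem
  set j := fun q : Pairs K → ℝ => ((0 : Fin (K - 1) → ℝ), q) with hj
  have hjc : ContDiff ℝ 1 j := contDiff_const.prodMk contDiff_id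
  have hjd : HasFDerivAt j (ContinuousLinearMap.inr ℝ _ _) q₀ :=
    hasFDerivAt_prodMk_right 0 q₀
  set V := interior (j ⁻¹' (u1 ∩ t)) with hV
  have hVnhds : j ⁻¹' (u1 ∩ t) ∈ nhds q₀ :=
    (hjc.continuous.continuousAt).preimage_mem_nhds (Filter.inter_mem hu1 ht)
  have hq₀V : q₀ ∈ V := mem_interior_iff_mem_nhds.2 hVnhds
  set φ := fun q => (gi (j q)).1 with hφ
  refine ⟨V, isOpen_interior, hq₀V, φ, ?_, ?_, ?_, ?_⟩
  · have hmap : Set.MapsTo j V u1 := by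
      intro q hq
      have hq'' : q ∈ j ⁻¹' (u1 ∩ t) := interior_subset hq
      exact (Set.mem_preimage.1 hq'').1
    have hcomp : ContDiffOn ℝ 1 (fun q => gi (j q)) V :=
      hgu1.comp (hjc.contDiffOn) hmap
    exact contDiff_fst.comp_contDiffOn hcomp
  · show (gi (j q₀)).1 = ϑ₀
    rw [show j q₀ = ((0 : Fin (K - 1) → ℝ), q₀) from rfl, hfix]
  · intro q hq
    have hq'' : q ∈ j ⁻¹' (u1 ∩ t) := interior_subset hq
    have hmem : j q ∈ u1 ∩ t := Set.mem_preimage.1 hq''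
    have hGgi : Gm (gi (j q)) = j q := hrt _ hmem.2
    have h1 : Fmap K ρ (gi (j q)) = 0 := congrArg Prod.fst hGgi
    have h2 : (gi (j q)).2 = q := congrArg Prod.snd hGgi
    have hpair : ((φ q, q) : (Fin (K - 1) → ℝ) × (Pairs K → ℝ)) = gi (j q) :=
      Prod.ext rfl h2.symm
    rw [hpair, h1]
  · have hgd' : HasFDerivAt gi
        ((e.symm : ((Fin (K - 1) → ℝ) × (Pairs K → ℝ)) →L[ℝ] _)) (j q₀) :=
      hgd.hasFDerivAt
    have hcomp1 : HasFDerivAt (fun q => gi (j q))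
        ((e.symm : ((Fin (K - 1) → ℝ) × (Pairs K → ℝ)) →L[ℝ] _).comp
          (ContinuousLinearMap.inr ℝ _ _)) q₀ := hgd'.comp q₀ hjd
    have hφd : HasFDerivAt φ
        ((ContinuousLinearMap.fst ℝ _ _).comp
          (((e.symm : ((Fin (K - 1) → ℝ) × (Pairs K → ℝ)) →L[ℝ] _).comp
            (ContinuousLinearMap.inr ℝ _ _)))) q₀ :=
      hasFDerivAt_fst.comp q₀ hcomp1
    rw [hφd.fderiv, hMd.fderiv]
    refine ContinuousLinearMap.ext fun w => ?_
    have h1 : e.symm ((0 : Fin (K - 1) → ℝ), w) = g₀ ((0 : Fin (K - 1) → ℝ), w) := hesymm _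
    simp only [ContinuousLinearMap.comp_apply, ContinuousLinearMap.inr_apply,
      ContinuousLinearMap.neg_apply]
    calc (ContinuousLinearMap.fst ℝ (Fin (K - 1) → ℝ) (Pairs K → ℝ))
          ((e.symm : ((Fin (K - 1) → ℝ) × (Pairs K → ℝ)) →L[ℝ]
            ((Fin (K - 1) → ℝ) × (Pairs K → ℝ))) ((0 : Fin (K - 1) → ℝ), w))
        = (e.symm ((0 : Fin (K - 1) → ℝ), w)).1 := rfl
      _ = (g₀ ((0 : Fin (K - 1) → ℝ), w)).1 := by rw [h1]
      _ = A.symm ((0 : Fin (K - 1) → ℝ) - M w) := by rw [hg₀app]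
      _ = -A.symm (M w) := by rw [zero_sub, map_neg]
end
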